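/- Let K ⊆ G be finite abstract simplicial complexes. Then the traces of the Hodge Laplacians satisfy trace(L(K)) ≤ trace(L(G)), and the forest quantities satisfy det(I + L(K)) ≤ det(I + L(G)). -/

import Mathlib

open Matrix

/-- A finite abstract simplicial complex: a finite collection of nonempty finite
subsets of the totally ordered vertex set `ℕ`, closed under taking nonempty subsets. -/
def IsComplex (G : Finset (Finset ℕ)) : Prop :=
  (∀ x ∈ G, x.Nonempty) ∧ ∀ x ∈ G, ∀ y ⊆ x, y.Nonempty → y ∈ G

/-- Entry of the exterior derivative: `(-1)^i` if `y ⊂ x`, `|x| = |y| + 1`, and the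
unique vertex of `x \ y` sits at position `i` (0-based) in the increasing enumeration
of `x`; `0` otherwise.  (The sum over the singleton `x \ y` extracts that position.) -/
noncomputable def dEntry (x y : Finset ℕ) : ℝ :=
  if y ⊆ x ∧ x.card = y.card + 1 then
    (-1 : ℝ) ^ ((x \ y).sum fun v => (x.filter (fun w => w < v)).card)
  else 0

/-- The exterior derivative of a complex, as a matrix indexed by the simplices. -/
noncomputable def extDer (G : Finset (Finset ℕ)) :
    Matrix {x // x ∈ G} {x // x ∈ G} ℝ :=
  Matrix.of fun x y => dEntry x.1 y.1

/-- The Dirac matrix `D = d + dᵀ`. -/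
noncomputable def dirac (G : Finset (Finset ℕ)) :
    Matrix {x // x ∈ G} {x // x ∈ G} ℝ :=
  extDer G + (extDer G)ᵀ

/-- The Hodge Laplacian `L = D²`. -/
noncomputable def hodge (G : Finset (Finset ℕ)) :
    Matrix {x // x ∈ G} {x // x ∈ G} ℝ :=
  dirac G * dirac G

/-- The ascending list of eigenvalues (with multiplicity) of a real symmetric matrix. -/
noncomputable def sortedEigs {m : Type*} [Fintype m] [DecidableEq m]
    (A : Matrix m m ℝ) : List ℝ :=
  if h : A.IsHermitian then (Finset.univ.val.map h.eigenvalues).sort (· ≤ ·) else []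


lemma conjT_eq_transpose {a b : Type*} (X : Matrix a b ℝ) : Xᴴ = Xᵀ := by
  ext i j; simp [conjTranspose_apply]

lemma one_le_det_one_add {n : Type*} [Fintype n] [DecidableEq n]
    {R : Matrix n n ℝ} (hR : R.PosSemidef) : (1 : ℝ) ≤ (1 + R).det := by
  have hH := hR.isHermitian
  set U := (hH.eigenvectorUnitary : Matrix n n ℝ) with hUdef
  have hU1 : U * star U = 1 := mem_unitaryGroup_iff.mp hH.eigenvectorUnitary.2
  have key : 1 + R = U * (1 + diagonal (RCLike.ofReal ∘ hH.eigenvalues)) * star U := by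
    rw [mul_add, add_mul, mul_one, hU1]
    congr 1
    exact hH.spectral_theorem
  have hdu : U.det * (star U).det = 1 := by
    rw [← det_mul, hU1, det_one]
  have hdd : (1 + diagonal (RCLike.ofReal ∘ hH.eigenvalues) : Matrix n n ℝ).det
      = ∏ i, (1 + hH.eigenvalues i) := by
    rw [← diagonal_one, diagonal_add, det_diagonal]
    simp
  have h1 : (1:ℝ) ≤ ∏ i, (1 + hH.eigenvalues i) := by
    have := Finset.prod_le_prod (s := Finset.univ) (f := fun _ : n => (1:ℝ))
      (g := fun i => 1 + hH.eigenvalues i) (fun i _ => zero_le_one)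
      (fun i _ => by have h0 : (0:ℝ) ≤ hH.eigenvalues i := hR.eigenvalues_nonneg i; linarith)
    simpa using this
  rw [key, det_mul, det_mul, hdd]
  have heq : U.det * (∏ i, (1 + hH.eigenvalues i)) * (star U).det
      = ∏ i, (1 + hH.eigenvalues i) := by
    rw [mul_comm U.det _, mul_assoc, hdu, mul_one]
  rw [heq]; exact h1

lemma det_one_add_mono {n : Type*} [Fintype n] [DecidableEq n]
    {P R : Matrix n n ℝ} (hP : P.PosSemidef) (hR : R.PosSemidef) :
    (1 + P).det ≤ (1 + P + R).det := by
  have hS : (1 + P).PosDef := Matrix.PosDef.one.add_posSemidef hP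
  open scoped MatrixOrder in set T := CFC.sqrt (1 + P) with hTdef
  have hTT : T * T = 1 + P := by
    open scoped MatrixOrder in exact CFC.sqrt_mul_sqrt_self _ hS.posSemidef.nonneg
  have hTps : T.PosSemidef := by
    open scoped MatrixOrder in exact (CFC.sqrt_nonneg _).posSemidef
  have hdet : (0:ℝ) < (1+P).det := hS.det_pos
  have hdT : T.det ≠ 0 := by
    intro h
    rw [← hTT, det_mul, h, mul_zero] at hdet
    exact lt_irrefl _ hdet
  have hTi : T * T⁻¹ = 1 := mul_nonsing_inv _ (isUnit_iff_ne_zero.mpr hdT)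
  have hiT : T⁻¹ * T = 1 := nonsing_inv_mul _ (isUnit_iff_ne_zero.mpr hdT)
  have hHi : (T⁻¹).IsHermitian := hTps.isHermitian.inv
  have hQ : (T⁻¹ * R * T⁻¹).PosSemidef := by
    have := hR.mul_mul_conjTranspose_same T⁻¹
    rwa [hHi.eq] at this
  have key : 1 + P + R = T * (1 + T⁻¹ * R * T⁻¹) * T := by
    rw [mul_add, add_mul, mul_one, hTT]
    congr 1
    rw [← mul_assoc, ← mul_assoc, hTi, one_mul, mul_assoc, hiT, mul_one]
  have h1 : (1:ℝ) ≤ (1 + T⁻¹ * R * T⁻¹).det := one_le_det_one_add hQ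
  have hTTdet : T.det * T.det = (1+P).det := by rw [← det_mul, hTT]
  rw [key, det_mul, det_mul]
  nlinarith [hdet]

/-- **Monotonicity of total energy and of the forest quantity.**  If `K ⊆ G` are finite
abstract simplicial complexes, then `tr(L(K)) ≤ tr(L(G))` and
`det(I + L(K)) ≤ det(I + L(G))`. -/
theorem trace_and_forest_monotone (K G : Finset (Finset ℕ))
    (hK : IsComplex K) (hG : IsComplex G) (hKG : K ⊆ G) :
    (hodge K).trace ≤ (hodge G).trace ∧
    (1 + hodge K).det ≤ (1 + hodge G).det := by
  classical
  have trace_eq : ∀ H : Finset (Finset ℕ),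
      (hodge H).trace = ∑ x ∈ H, ∑ y ∈ H,
        (dEntry x y + dEntry y x) * (dEntry y x + dEntry x y) := by
    intro H
    rw [Matrix.trace, Finset.univ_eq_attach,
      ← Finset.sum_attach H (fun x => ∑ y ∈ H,
        (dEntry x y + dEntry y x) * (dEntry y x + dEntry x y))]
    apply Finset.sum_congr rfl
    intro x _
    show (hodge H) x x = _
    rw [hodge, Matrix.mul_apply, Finset.univ_eq_attach,
      ← Finset.sum_attach H (fun y => (dEntry ↑x y + dEntry y ↑x) * (dEntry y ↑x + dEntry ↑x y))]
    apply Finset.sum_congr rfl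
    intro y _
    simp [dirac, extDer]
  have hnn : ∀ a b : Finset ℕ,
      0 ≤ (dEntry a b + dEntry b a) * (dEntry b a + dEntry a b) := by
    intro a b; rw [add_comm (dEntry b a)]; exact mul_self_nonneg _
  constructor
  · rw [trace_eq K, trace_eq G]
    calc ∑ x ∈ K, ∑ y ∈ K, (dEntry x y + dEntry y x) * (dEntry y x + dEntry x y)
        ≤ ∑ x ∈ K, ∑ y ∈ G, (dEntry x y + dEntry y x) * (dEntry y x + dEntry x y) :=
          Finset.sum_le_sum fun x _ =>
            Finset.sum_le_sum_of_subset_of_nonneg hKG fun y _ _ => hnn x y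
      _ ≤ ∑ x ∈ G, ∑ y ∈ G, (dEntry x y + dEntry y x) * (dEntry y x + dEntry x y) :=
          Finset.sum_le_sum_of_subset_of_nonneg hKG fun x _ _ =>
            Finset.sum_nonneg fun y _ => hnn x y
  · set A := dirac G with hAdef
    set Pr : Matrix {x // x ∈ G} {x // x ∈ G} ℝ :=
      Matrix.diagonal (fun j => if (j : Finset ℕ) ∈ K then (1:ℝ) else 0) with hPrdef
    set Pc : Matrix {x // x ∈ G} {x // x ∈ G} ℝ := 1 - Pr with hPcdef
    set E : Matrix {x // x ∈ K} {x // x ∈ G} ℝ :=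
      Matrix.of (fun i j => if (i : Finset ℕ) = (j : Finset ℕ) then (1:ℝ) else 0) with hEdef
    have hAt : Aᵀ = A := by
      rw [hAdef, dirac, transpose_add, transpose_transpose, add_comm]
    have hAH : Aᴴ = A := by rw [conjT_eq_transpose, hAt]
    have hPrt : Prᵀ = Pr := diagonal_transpose _
    have hPrH : Prᴴ = Pr := by rw [conjT_eq_transpose, hPrt]
    have hPP : Pr * Pr = Pr := by
      rw [hPrdef, diagonal_mul_diagonal]
      apply congrArg Matrix.diagonal
      funext j
      by_cases h : (j : Finset ℕ) ∈ K <;> simp [h]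
    have hPct : Pcᵀ = Pc := by rw [hPcdef, transpose_sub, transpose_one, hPrt]
    have hPcH : Pcᴴ = Pc := by rw [conjT_eq_transpose, hPct]
    have hPcc : Pc * Pc = Pc := by
      rw [hPcdef, sub_mul, one_mul, mul_sub, mul_one, hPP, sub_self, sub_zero]
    have hsum : Pr + Pc = 1 := by rw [hPcdef]; abel
    have hPl : ∀ X : Matrix {x // x ∈ G} {x // x ∈ G} ℝ, Pr * (Pr * X) = Pr * X := by
      intro X; rw [← Matrix.mul_assoc, hPP]
    have hPcl : ∀ X : Matrix {x // x ∈ G} {x // x ∈ G} ℝ, Pc * (Pc * X) = Pc * X := by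
      intro X; rw [← Matrix.mul_assoc, hPcc]
    have hEE : Eᵀ * E = Pr := by
      ext a b
      rw [Matrix.mul_apply]
      by_cases hab : a = b
      · subst hab
        by_cases ha : (a : Finset ℕ) ∈ K
        · rw [Finset.sum_eq_single (⟨(a : Finset ℕ), ha⟩ : {x // x ∈ K})]
          · simp [hEdef, hPrdef, ha]
          · intro i _ hi
            have h2 : (i : Finset ℕ) ≠ (a : Finset ℕ) := fun h => hi (Subtype.ext h)
            simp [hEdef, h2]
          · intro h; exact absurd (Finset.mem_univ _) h
        · rw [Finset.sum_eq_zero]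
          · simp [hPrdef, ha]
          · intro i _
            have h2 : (i : Finset ℕ) ≠ (a : Finset ℕ) := fun h => ha (h ▸ i.2)
            simp [hEdef, h2]
      · have hab' : (a : Finset ℕ) ≠ (b : Finset ℕ) := fun h => hab (Subtype.ext h)
        rw [Finset.sum_eq_zero]
        · rw [hPrdef]; exact (Matrix.diagonal_apply_ne _ hab).symm
        · intro i _
          by_cases h1 : (i : Finset ℕ) = (a : Finset ℕ)
          · have h2 : (i : Finset ℕ) ≠ (b : Finset ℕ) := fun h => hab' (h1 ▸ h)
            simp [hEdef, h2]
          · simp [hEdef, h1]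
    have hEA : ∀ (M : Matrix {x // x ∈ G} {x // x ∈ G} ℝ) (i : {x // x ∈ K}) b,
        (E * M) i b = M ⟨(i : Finset ℕ), hKG i.2⟩ b := by
      intro M i b
      rw [Matrix.mul_apply, Finset.sum_eq_single (⟨(i : Finset ℕ), hKG i.2⟩ : {x // x ∈ G})]
      · simp [hEdef]
      · intro j _ hj
        have h2 : (i : Finset ℕ) ≠ (j : Finset ℕ) := fun h => hj (Subtype.ext h.symm)
        simp [hEdef, h2]
      · intro h; exact absurd (Finset.mem_univ _) h
    have hME : ∀ (M : Matrix {x // x ∈ K} {x // x ∈ G} ℝ) (a : {x // x ∈ K}) (j : {x // x ∈ K}),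
        (M * Eᵀ) a j = M a ⟨(j : Finset ℕ), hKG j.2⟩ := by
      intro M a j
      rw [Matrix.mul_apply, Finset.sum_eq_single (⟨(j : Finset ℕ), hKG j.2⟩ : {x // x ∈ G})]
      · simp [hEdef]
      · intro b _ hb
        have h2 : (j : Finset ℕ) ≠ (b : Finset ℕ) := fun h => hb (Subtype.ext h.symm)
        simp [hEdef, h2]
      · intro h; exact absurd (Finset.mem_univ _) h
    have hDK : dirac K = E * A * Eᵀ := by
      ext i j
      rw [hME (E * A) i j, hEA A i]
      simp [dirac, extDer, hAdef]
    -- Step 1 : det (1 + hodge K) = det (1 + A * (Pr * (A * Pr)))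
    have e1 : (1 + hodge K).det = (1 + A * (Pr * (A * Pr))).det := by
      rw [hodge, hDK,
        show E * A * Eᵀ * (E * A * Eᵀ) = E * (A * (Eᵀ * (E * (A * Eᵀ)))) by
          simp only [Matrix.mul_assoc],
        show Eᵀ * (E * (A * Eᵀ)) = Pr * (A * Eᵀ) by rw [← Matrix.mul_assoc, hEE],
        det_one_add_mul_comm E (A * (Pr * (A * Eᵀ))),
        show A * (Pr * (A * Eᵀ)) * E = A * (Pr * (A * Pr)) by
          simp only [Matrix.mul_assoc]; rw [hEE]]
    -- Step 2 : pass to P2 = Pr * (A * (Pr * (A * Pr)))  (= Π A Π A Π)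
    have e2 : (1 + A * (Pr * (A * Pr))).det = (1 + Pr * (A * (Pr * (A * Pr)))).det := by
      rw [det_one_add_mul_comm Pr (A * (Pr * (A * Pr))),
        show A * (Pr * (A * Pr)) * Pr = A * (Pr * (A * Pr)) by
          simp only [Matrix.mul_assoc]; rw [hPP]]
    have hP2 : (Pr * (A * (Pr * (A * Pr)))).PosSemidef := by
      have hBH : (Pr * (A * Pr))ᴴ = Pr * (A * Pr) := by
        rw [conjT_eq_transpose, transpose_mul, transpose_mul, hPrt, hAt, Matrix.mul_assoc]
      have h := posSemidef_self_mul_conjTranspose (Pr * (A * Pr))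
      rw [hBH] at h
      rwa [show Pr * (A * Pr) * (Pr * (A * Pr)) = Pr * (A * (Pr * (A * Pr))) by
        simp only [Matrix.mul_assoc]; rw [hPl]] at h
    have hR2 : (Pr * (A * (Pc * (A * Pr)))).PosSemidef := by
      have hC2H : (Pr * (A * Pc))ᴴ = Pc * (A * Pr) := by
        rw [conjT_eq_transpose, transpose_mul, transpose_mul, hPct, hAt, hPrt, Matrix.mul_assoc]
      have h := posSemidef_self_mul_conjTranspose (Pr * (A * Pc))
      rw [hC2H] at h
      rwa [show Pr * (A * Pc) * (Pc * (A * Pr)) = Pr * (A * (Pc * (A * Pr))) by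
        simp only [Matrix.mul_assoc]; rw [hPcl]] at h
    have hsum2 : Pr * (A * (Pr * (A * Pr))) + Pr * (A * (Pc * (A * Pr)))
        = Pr * (A * (A * Pr)) := by
      rw [← Matrix.mul_add, ← Matrix.mul_add, ← Matrix.add_mul, hsum, Matrix.one_mul]
    have step2 : (1 + Pr * (A * (Pr * (A * Pr)))).det ≤ (1 + Pr * (A * (A * Pr))).det := by
      have h := det_one_add_mono hP2 hR2
      rwa [add_assoc, hsum2] at h
    -- Step 3 : det (1 + Pr * (A * (A * Pr))) = det (1 + A * (Pr * A))
    have e3 : (1 + Pr * (A * (A * Pr))).det = (1 + A * (Pr * A)).det := by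
      rw [det_one_add_mul_comm Pr (A * (A * Pr)),
        show A * (A * Pr) * Pr = A * (A * Pr) by simp only [Matrix.mul_assoc]; rw [hPP],
        det_one_add_mul_comm A (A * Pr),
        show A * Pr * A = A * (Pr * A) by rw [Matrix.mul_assoc]]
    -- Step 4 : det (1 + A * (Pr * A)) ≤ det (1 + A * A)
    have hP4 : (A * (Pr * A)).PosSemidef := by
      have hC4H : (A * Pr)ᴴ = Pr * A := by
        rw [conjT_eq_transpose, transpose_mul, hPrt, hAt]
      have h := posSemidef_self_mul_conjTranspose (A * Pr)
      rw [hC4H] at h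
      rwa [show A * Pr * (Pr * A) = A * (Pr * A) by
        simp only [Matrix.mul_assoc]; rw [hPl]] at h
    have hR4 : (A * (Pc * A)).PosSemidef := by
      have hC4H : (A * Pc)ᴴ = Pc * A := by
        rw [conjT_eq_transpose, transpose_mul, hPct, hAt]
      have h := posSemidef_self_mul_conjTranspose (A * Pc)
      rw [hC4H] at h
      rwa [show A * Pc * (Pc * A) = A * (Pc * A) by
        simp only [Matrix.mul_assoc]; rw [hPcl]] at h
    have hsum4 : A * (Pr * A) + A * (Pc * A) = A * A := by
      rw [← Matrix.mul_add, ← Matrix.add_mul, hsum, Matrix.one_mul]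
    have step4 : (1 + A * (Pr * A)).det ≤ (1 + A * A).det := by
      have h := det_one_add_mono hP4 hR4
      rwa [add_assoc, hsum4] at h
    calc (1 + hodge K).det = (1 + Pr * (A * (Pr * (A * Pr)))).det := by rw [e1, e2]
      _ ≤ (1 + Pr * (A * (A * Pr))).det := step2
      _ = (1 + A * (Pr * A)).det := e3
      _ ≤ (1 + A * A).det := step4
      _ = (1 + hodge G).det := by rw [hodge]
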